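/- Fix k ∈ Z_+[I] with k_i ≤ 1 for i ∈ I^re ∪ Ψ_0. Then the root space g_{η(k)} of a BKM superalgebra g with quasi Dynkin diagram (G,Ψ) is isomorphic, as a vector space, to the k-graded component LS_k(G,Ψ) of the free partially commutative Lie superalgebra; in particular mult η(k) = dim LS_k(G,Ψ). -/

import Mathlib

open scoped Classical
noncomputable section

/-- The weight of a word: the finitely supported function counting the occurrences of
each letter. -/
def wordWeight {I : Type*} (w : List I) : I →₀ ℕ :=
  (w.map fun i => Finsupp.single i 1).sum

/-- The parity (in `ℤ/2`) of a weight, counting only letters belonging to the odd set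
`Ψ`. -/
def wtPar {I : Type*} (Ψ : Set I) (k : I →₀ ℕ) : ZMod 2 :=
  k.sum fun i n => if i ∈ Ψ then (n : ZMod 2) else 0

/-- A Borcherds–Kac–Moody supermatrix `(A, Ψ)`:  a real matrix together with a set `Ψ`
of odd indices satisfying the defining conditions of a BKM supermatrix. -/
structure BKMSupermatrix (I : Type*) where
  a : I → I → ℝ
  Ψ : Set I
  diag : ∀ i, a i i = 2 ∨ a i i ≤ 0
  offdiag : ∀ i j, i ≠ j → a i j ≤ 0
  zero_iff : ∀ i j, a i j = 0 ↔ a j i = 0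
  isInt : ∀ i j, a i i = 2 → ∃ n : ℤ, a i j = (n : ℝ)
  isEvenInt : ∀ i j, a i i = 2 → i ∈ Ψ → ∃ n : ℤ, a i j = 2 * (n : ℝ)
  symmetrizable : ∃ d : I → ℝ, (∀ i, 0 < d i) ∧ ∀ i j, d i * a i j = d j * a j i

namespace BKMSupermatrix

variable {I : Type*} (A : BKMSupermatrix I)

/-- The set of real simple roots: `I^re = {i | a_{ii} = 2}`. -/
def Ire : Set I := {i | A.a i i = 2}

/-- The set of odd simple roots of zero norm: `Ψ₀ = {i ∈ Ψ | a_{ii} = 0}`. -/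
def Psi0 : Set I := {i | i ∈ A.Ψ ∧ A.a i i = 0}

/-- The quasi Dynkin diagram of `(A, Ψ)`: the simple graph on `I` in which two distinct
vertices `i, j` are adjacent iff `a_{ij} ≠ 0`. -/
def quasiDynkin : SimpleGraph I where
  Adj i j := i ≠ j ∧ A.a i j ≠ 0
  symm := by
    constructor
    rintro i j ⟨hne, hz⟩
    exact ⟨hne.symm, fun h => hz ((A.zero_iff i j).mpr h)⟩
  loopless := by constructor; rintro i ⟨h, _⟩; exact h rfl

end BKMSupermatrix

/-- The free associative superalgebra on generators `e_i`, realized as the monoid algebra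
of the free monoid on `I`; the free Lie superalgebra sits inside it via the
super-commutator. -/
abbrev FA (I : Type*) := MonoidAlgebra ℂ (FreeMonoid I)

variable {I : Type*}

/-- The underlying finitely supported coefficient function of an element of `FA I`. -/
def coeffs (x : FA I) : FreeMonoid I →₀ ℂ := x.coeff

/-- The weight of a monomial in `FA I`. -/
def wordWt (m : FreeMonoid I) : I →₀ ℕ := wordWeight (FreeMonoid.toList m)

/-- The generator `e_i` of `FA I`. -/
def eGen (i : I) : FA I := MonoidAlgebra.single (FreeMonoid.of i) 1

/-- The Koszul sign `(-1)^{|m||m'|}` attached to a pair of monomials. -/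
def ssign (Ψ : Set I) (m m' : FreeMonoid I) : ℂ :=
  if wtPar Ψ (wordWt m) = 1 ∧ wtPar Ψ (wordWt m') = 1 then -1 else 1

/-- The super-commutator `[x,y] = xy - (-1)^{|x||y|} yx` on `FA I`, extended bilinearly
from homogeneous monomials. -/
def sbra (Ψ : Set I) (x y : FA I) : FA I :=
  Finsupp.sum (coeffs x) fun m c => Finsupp.sum (coeffs y) fun m' c' =>
    (c * c') • (MonoidAlgebra.single (m * m') 1 - ssign Ψ m m' • MonoidAlgebra.single (m' * m) 1)

/-- Lie monomials in the generators `e_i`: the elements of `FA I` obtained from the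
generators by iterated super-brackets.  Their span is the free Lie superalgebra on the
`ℤ/2`-graded set `I`. -/
inductive IsLieWord (Ψ : Set I) : FA I → Prop
  | gen (i : I) : IsLieWord Ψ (eGen i)
  | bra {x y : FA I} : IsLieWord Ψ x → IsLieWord Ψ y → IsLieWord Ψ (sbra Ψ x y)

/-- Iterated adjoint action `(ad x)^n y` with respect to the super-bracket. -/
def adpow (Ψ : Set I) : ℕ → FA I → FA I → FA I
  | 0, _, y => y
  | n + 1, x, y => sbra Ψ x (adpow Ψ n x y)

/-- The Serre exponent `1 - a_{ij}`. -/
def serreExp (A : BKMSupermatrix I) (i j : I) : ℕ := (1 - ⌊A.a i j⌋).toNat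

/-- The halved Serre exponent `1 - a_{ij}/2`. -/
def serreExpHalf (A : BKMSupermatrix I) (i j : I) : ℕ := (1 - ⌊A.a i j / 2⌋).toNat

/-- The defining relations of the positive part of the BKM superalgebra `g(A,Ψ)`:
the Serre relations `(ad e_i)^{1-a_{ij}} e_j = 0` for real `i ≠ j`,
`(ad e_i)^{1-a_{ij}/2} e_j = 0` for `i ∈ Ψ^{re}`, `i ≠ j`,
`(ad e_i)^{1-a_{ii}/2} e_i = 0` for `i ∈ Ψ₀`, and the commutation relations
`[e_i, e_j] = 0` whenever `a_{ij} = 0`. -/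
def bkmRels (A : BKMSupermatrix I) : Set (FA I) :=
  {x | ∃ i j, i ∈ A.Ire ∧ i ≠ j ∧ x = adpow A.Ψ (serreExp A i j) (eGen i) (eGen j)} ∪
  {x | ∃ i j, i ∈ A.Ire ∧ i ∈ A.Ψ ∧ i ≠ j ∧
        x = adpow A.Ψ (serreExpHalf A i j) (eGen i) (eGen j)} ∪
  {x | ∃ i, i ∈ A.Psi0 ∧ x = adpow A.Ψ (serreExpHalf A i i) (eGen i) (eGen i)} ∪
  {x | ∃ i j, i ≠ j ∧ A.a i j = 0 ∧ x = sbra A.Ψ (eGen i) (eGen j)}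

/-- Only the commutation relations `[e_i, e_j] = 0` for `{i,j}` not an edge of `G`;
these are the defining relations of the free partially commutative Lie superalgebra
`LS(G,Ψ)`. -/
def commRels (G : SimpleGraph I) (Ψ : Set I) : Set (FA I) :=
  {x | ∃ i j, i ≠ j ∧ ¬ G.Adj i j ∧ x = sbra Ψ (eGen i) (eGen j)}

/-- The relation imposing `x = 0` for every `x` in a set `R` of relations. -/
def relOf (R : Set (FA I)) : FA I → FA I → Prop := fun x y => x ∈ R ∧ y = 0

/-- The quotient of the free associative superalgebra by the two-sided ideal generated by
a set of relations; by (super) PBW it is the enveloping algebra of the corresponding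
quotient of the free Lie superalgebra, which embeds into it. -/
abbrev QuotAlg (R : Set (FA I)) := RingQuot (relOf R)

/-- The quotient map. -/
def quotMap (R : Set (FA I)) : FA I →ₐ[ℂ] QuotAlg R := RingQuot.mkAlgHom ℂ (relOf R)

/-- The weight-`k` graded piece of the quotient Lie superalgebra: the span of the images
of the Lie monomials of weight `k`. -/
def imageWeight (Ψ : Set I) (R : Set (FA I)) (k : I →₀ ℕ) : Submodule ℂ (QuotAlg R) :=
  Submodule.span ℂ
    {y | ∃ x : FA I, IsLieWord Ψ x ∧ (∀ m, coeffs x m ≠ 0 → wordWt m = k) ∧ y = quotMap R x}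

/-- The root space `g_{η(k)}` of the BKM superalgebra `g(A,Ψ)` (for `k ∈ Q₊`, it lies in
the positive part `n₊`, which is the free Lie superalgebra on the `e_i` modulo the Serre
and commutation relations). -/
def gWeight (A : BKMSupermatrix I) (k : I →₀ ℕ) : Submodule ℂ (QuotAlg (bkmRels A)) :=
  imageWeight A.Ψ (bkmRels A) k

/-- The weight-`k` graded piece `LS_k(G,Ψ)` of the free partially commutative Lie
superalgebra `LS(G,Ψ)` associated to the supergraph `(G,Ψ)`. -/
def LSwt (G : SimpleGraph I) (Ψ : Set I) (k : I →₀ ℕ) :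
    Submodule ℂ (QuotAlg (commRels G Ψ)) :=
  imageWeight Ψ (commRels G Ψ) k

/-- `η(k) = Σ kᵢ αᵢ` is *free* if `kᵢ ≤ 1` for every real simple root and every odd
simple root of zero norm. -/
def IsFreeWt (A : BKMSupermatrix I) (k : I →₀ ℕ) : Prop := ∀ i ∈ A.Ire ∪ A.Psi0, k i ≤ 1

/-- `η(k)` is a positive root of `g(A,Ψ)`: it is nonzero and its root space is
nonzero. -/
def IsPosRoot (A : BKMSupermatrix I) (k : I →₀ ℕ) : Prop := k ≠ 0 ∧ gWeight A k ≠ ⊥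

/-- The multiplicity `mult η(k) = dim g_{η(k)}`. -/
def rootMult (A : BKMSupermatrix I) (k : I →₀ ℕ) : ℕ := Module.finrank ℂ ↥(gWeight A k)
section Aux

variable {I : Type*}

lemma wordWt_mul (m m' : FreeMonoid I) : wordWt (m * m') = wordWt m + wordWt m' := by
  simp [wordWt, wordWeight, FreeMonoid.toList_mul]

lemma wordWt_of (i : I) : wordWt (FreeMonoid.of i) = Finsupp.single i 1 := by
  simp [wordWt, wordWeight, FreeMonoid.toList_of]

/-- Homogeneity of weight `w`. -/
def IsHomog (w : I →₀ ℕ) (x : FA I) : Prop := ∀ m, coeffs x m ≠ 0 → wordWt m = w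

lemma isHomog_zero (w : I →₀ ℕ) : IsHomog w (0 : FA I) := by
  intro m hm; simp [coeffs] at hm

lemma IsHomog.add {w : I →₀ ℕ} {x y : FA I} (hx : IsHomog w x) (hy : IsHomog w y) :
    IsHomog w (x + y) := by
  intro m hm
  have : coeffs x m ≠ 0 ∨ coeffs y m ≠ 0 := by
    by_contra h
    push_neg at h
    apply hm
    show (x + y).coeff m = 0
    rw [MonoidAlgebra.coeff_add, Finsupp.add_apply]
    have h1 : x.coeff m = 0 := h.1
    have h2 : y.coeff m = 0 := h.2
    rw [h1, h2, add_zero]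
  rcases this with h | h
  · exact hx m h
  · exact hy m h

lemma IsHomog.smul {w : I →₀ ℕ} {c : ℂ} {x : FA I} (hx : IsHomog w x) :
    IsHomog w (c • x) := by
  intro m hm
  apply hx
  intro h
  apply hm
  show (c • x).coeff m = 0
  rw [MonoidAlgebra.coeff_smul, Finsupp.smul_apply]
  have : x.coeff m = 0 := h
  rw [this, smul_zero]

lemma isHomog_single (m : FreeMonoid I) (c : ℂ) :
    IsHomog (wordWt m) (MonoidAlgebra.single m c : FA I) := by
  intro m' hm'
  simp only [coeffs, MonoidAlgebra.coeff_single] at hm'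
  by_contra h
  exact hm' (Finsupp.single_eq_of_ne' (fun he => h (he ▸ rfl)))

lemma isHomog_eGen (i : I) : IsHomog (Finsupp.single i 1) (eGen i) := by
  have := isHomog_single (FreeMonoid.of i) (1 : ℂ)
  rwa [wordWt_of] at this

end Aux
section Aux2
variable {I : Type*}

lemma IsHomog.mul {w w' : I →₀ ℕ} {x y : FA I} (hx : IsHomog w x) (hy : IsHomog w' y) :
    IsHomog (w + w') (x * y) := by
  intro m hm
  have hmem : m ∈ (x * y).coeff.support := Finsupp.mem_support_iff.mpr hm
  have := MonoidAlgebra.support_coeff_mul_subset x y hmem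
  obtain ⟨a, ha, b, hb, h3⟩ := Finset.mem_mul.mp this
  subst h3
  rw [wordWt_mul, hx a (Finsupp.mem_support_iff.mp ha), hy b (Finsupp.mem_support_iff.mp hb)]

lemma isHomog_sbra {Ψ : Set I} {w w' : I →₀ ℕ} {x y : FA I} (hx : IsHomog w x)
    (hy : IsHomog w' y) : IsHomog (w + w') (sbra Ψ x y) := by
  intro m hm
  have hm' : Finsupp.sum (coeffs x) (fun m1 c => Finsupp.sum (coeffs y) fun m2 c' =>
      ((c * c') • (MonoidAlgebra.single (m1 * m2) (1:ℂ)
        - ssign Ψ m1 m2 • MonoidAlgebra.single (m2 * m1) 1) : FA I).coeff m) ≠ 0 := by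
    intro h
    apply hm
    show (sbra Ψ x y).coeff m = 0
    rw [sbra, MonoidAlgebra.coeff_finsuppSum, Finsupp.sum_apply]
    rw [← h]
    congr 1
    ext m1 c
    rw [MonoidAlgebra.coeff_finsuppSum, Finsupp.sum_apply]
  rw [Finsupp.sum] at hm'
  obtain ⟨m1, hm1, h1⟩ := Finset.exists_ne_zero_of_sum_ne_zero hm'
  rw [Finsupp.sum] at h1
  obtain ⟨m2, hm2, h2⟩ := Finset.exists_ne_zero_of_sum_ne_zero h1
  have hw1 := hx m1 (Finsupp.mem_support_iff.mp hm1)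
  have hw2 := hy m2 (Finsupp.mem_support_iff.mp hm2)
  rw [MonoidAlgebra.coeff_smul, Finsupp.smul_apply, MonoidAlgebra.coeff_sub, Finsupp.sub_apply,
    MonoidAlgebra.coeff_smul, Finsupp.smul_apply] at h2
  by_cases e1 : m = m1 * m2
  · rw [e1, wordWt_mul, hw1, hw2]
  · by_cases e2 : m = m2 * m1
    · rw [e2, wordWt_mul, hw1, hw2, add_comm]
    · exfalso
      apply h2
      have z1 : (MonoidAlgebra.single (m1 * m2) (1:ℂ) : FA I).coeff m = 0 :=
        Finsupp.single_eq_of_ne' (fun h => e1 h.symm)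
      have z2 : (MonoidAlgebra.single (m2 * m1) (1:ℂ) : FA I).coeff m = 0 :=
        Finsupp.single_eq_of_ne' (fun h => e2 h.symm)
      rw [z1, z2, smul_zero, sub_zero, smul_zero]

lemma isHomog_adpow {Ψ : Set I} (n : ℕ) (i j : I) :
    IsHomog (n • Finsupp.single i 1 + Finsupp.single j 1) (adpow Ψ n (eGen i) (eGen j)) := by
  induction n with
  | zero => simpa [adpow] using isHomog_eGen j
  | succ n ih =>
      have := isHomog_sbra (Ψ := Ψ) (isHomog_eGen (I := I) i) ih
      have h2 : Finsupp.single i 1 + (n • Finsupp.single i (1:ℕ) + Finsupp.single j 1)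
          = (n+1) • Finsupp.single i 1 + Finsupp.single j 1 := by
        rw [succ_nsmul]; abel
      rw [show adpow Ψ (n+1) (eGen i) (eGen j)
          = sbra Ψ (eGen i) (adpow Ψ n (eGen i) (eGen j)) from rfl]
      exact h2 ▸ this

end Aux2
section Ideal
variable {I : Type*}

/-- The two-sided ideal generated by a set of relations, as a `ℂ`-submodule. -/
def tsi (R : Set (FA I)) : Submodule ℂ (FA I) :=
  Submodule.span ℂ {x | ∃ a b : FreeMonoid I, ∃ r ∈ R,
    x = MonoidAlgebra.single a 1 * r * MonoidAlgebra.single b 1}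

lemma mem_tsi_of_mem {R : Set (FA I)} {r : FA I} (hr : r ∈ R) : r ∈ tsi R := by
  apply Submodule.subset_span
  refine ⟨1, 1, r, hr, ?_⟩
  rw [show (MonoidAlgebra.single (1 : FreeMonoid I) (1:ℂ) : FA I) = 1 from rfl]
  rw [one_mul, mul_one]

lemma tsi_mul_left {R : Set (FA I)} (c : FA I) {x : FA I} (hx : x ∈ tsi R) :
    c * x ∈ tsi R := by
  induction hx using Submodule.span_induction with
  | mem g hg =>
      obtain ⟨a, b, r, hr, rfl⟩ := hg
      induction c using MonoidAlgebra.induction_on with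
      | of m =>
          have : (MonoidAlgebra.of ℂ (FreeMonoid I) m : FA I) *
              (MonoidAlgebra.single a 1 * r * MonoidAlgebra.single b 1)
              = MonoidAlgebra.single (m * a) 1 * r * MonoidAlgebra.single b 1 := by
            rw [show (MonoidAlgebra.of ℂ (FreeMonoid I) m : FA I)
                = MonoidAlgebra.single m 1 from rfl]
            rw [← mul_assoc, ← mul_assoc, MonoidAlgebra.single_mul_single, one_mul]
          rw [this]
          exact Submodule.subset_span ⟨m * a, b, r, hr, rfl⟩
      | add p q hp hq => rw [add_mul]; exact Submodule.add_mem _ hp hq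
      | smul t p hp => rw [smul_mul_assoc]; exact Submodule.smul_mem _ _ hp
  | zero => rw [mul_zero]; exact Submodule.zero_mem _
  | add p q _ _ hp hq => rw [mul_add]; exact Submodule.add_mem _ hp hq
  | smul t p _ hp => rw [mul_smul_comm]; exact Submodule.smul_mem _ _ hp

lemma tsi_mul_right {R : Set (FA I)} (c : FA I) {x : FA I} (hx : x ∈ tsi R) :
    x * c ∈ tsi R := by
  induction hx using Submodule.span_induction with
  | mem g hg =>
      obtain ⟨a, b, r, hr, rfl⟩ := hg
      induction c using MonoidAlgebra.induction_on with
      | of m =>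
          have : (MonoidAlgebra.single a 1 * r * MonoidAlgebra.single b 1 : FA I) *
              MonoidAlgebra.of ℂ (FreeMonoid I) m
              = MonoidAlgebra.single a 1 * r * MonoidAlgebra.single (b * m) 1 := by
            rw [show (MonoidAlgebra.of ℂ (FreeMonoid I) m : FA I)
                = MonoidAlgebra.single m 1 from rfl]
            rw [mul_assoc, mul_assoc, MonoidAlgebra.single_mul_single, one_mul, ← mul_assoc]
          rw [this]
          exact Submodule.subset_span ⟨a, b * m, r, hr, rfl⟩
      | add p q hp hq => rw [mul_add]; exact Submodule.add_mem _ hp hq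
      | smul t p hp => rw [mul_smul_comm]; exact Submodule.smul_mem _ _ hp
  | zero => rw [zero_mul]; exact Submodule.zero_mem _
  | add p q _ _ hp hq => rw [add_mul]; exact Submodule.add_mem _ hp hq
  | smul t p _ hp => rw [smul_mul_assoc]; exact Submodule.smul_mem _ _ hp

lemma quotMap_rel_zero {R : Set (FA I)} {r : FA I} (hr : r ∈ R) : quotMap R r = 0 := by
  have := RingQuot.mkAlgHom_rel ℂ (s := relOf R) (x := r) (y := 0) ⟨hr, rfl⟩
  rw [quotMap, this, map_zero]

lemma quotMap_eq_zero_of_mem {R : Set (FA I)} {x : FA I} (hx : x ∈ tsi R) :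
    quotMap R x = 0 := by
  induction hx using Submodule.span_induction with
  | mem g hg =>
      obtain ⟨a, b, r, hr, rfl⟩ := hg
      rw [map_mul, map_mul, quotMap_rel_zero hr, mul_zero, zero_mul]
  | zero => exact map_zero _
  | add p q _ _ hp hq => rw [map_add, hp, hq, add_zero]
  | smul t p _ hp => rw [map_smul, hp, smul_zero]

lemma rel_sub_mem {R : Set (FA I)} {x y : FA I} (h : RingQuot.Rel (relOf R) x y) :
    x - y ∈ tsi R := by
  induction h with
  | of h => rw [h.2, sub_zero]; exact mem_tsi_of_mem h.1
  | add_left _ ih => simpa using ih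
  | mul_left h ih =>
      rw [← sub_mul]
      exact tsi_mul_right _ ih
  | mul_right h ih =>
      rw [← mul_sub]
      exact tsi_mul_left _ ih

lemma eqvGen_sub_mem {R : Set (FA I)} {x y : FA I}
    (h : Relation.EqvGen (RingQuot.Rel (relOf R)) x y) : x - y ∈ tsi R := by
  induction h with
  | rel _ _ h => exact rel_sub_mem h
  | refl a => simpa using Submodule.zero_mem (tsi R)
  | symm a b _ ih => rw [← neg_sub]; exact Submodule.neg_mem _ ih
  | trans a b c _ _ ih1 ih2 =>
      rw [← sub_add_sub_cancel a b c]
      exact Submodule.add_mem _ ih1 ih2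

lemma mem_tsi_of_quotMap_eq_zero {R : Set (FA I)} {x : FA I} (hx : quotMap R x = 0) :
    x ∈ tsi R := by
  have h0 : quotMap R x = quotMap R 0 := by rw [map_zero]; exact hx
  have hco : ∀ z : FA I, RingQuot.mkRingHom (relOf R) z = quotMap R z := by
    intro z
    rw [quotMap, ← RingQuot.mkAlgHom_coe ℂ (relOf R)]
    rfl
  have h1 : RingQuot.mkRingHom (relOf R) x = RingQuot.mkRingHom (relOf R) 0 := by
    rw [hco, hco]; exact h0
  rw [RingQuot.mkRingHom_def] at h1
  simp only [RingHom.coe_mk, MonoidHom.coe_mk, OneHom.coe_mk] at h1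
  have h2 : Quot.mk (RingQuot.Rel (relOf R)) x = Quot.mk (RingQuot.Rel (relOf R)) 0 :=
    congrArg RingQuot.toQuot h1
  have h3 := Quot.eq.mp h2
  simpa using eqvGen_sub_mem h3
end Ideal
section Proj
variable {I : Type*}

/-- Projection onto the weight-`k` homogeneous component. -/
def projWt (k : I →₀ ℕ) : FA I →ₗ[ℂ] FA I where
  toFun x := MonoidAlgebra.ofCoeff (Finsupp.filter (fun m => wordWt m = k) x.coeff)
  map_add' x y := congrArg MonoidAlgebra.ofCoeff Finsupp.filter_add
  map_smul' c x := congrArg MonoidAlgebra.ofCoeff Finsupp.filter_smul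

lemma projWt_of_isHomog {k : I →₀ ℕ} {x : FA I} (hx : IsHomog k x) : projWt k x = x :=
  MonoidAlgebra.coeff_injective ((Finsupp.filter_eq_self_iff _ _).mpr (fun m hm => hx m hm))

lemma projWt_eq_zero {k : I →₀ ℕ} {x : FA I} (hx : ∀ m, coeffs x m ≠ 0 → wordWt m ≠ k) :
    projWt k x = 0 :=
  MonoidAlgebra.coeff_injective ((Finsupp.filter_eq_zero_iff _ _).mpr (fun m hm => by
    by_contra h
    exact hx m h hm))

lemma projWt_mem_pair {k w : I →₀ ℕ} {x : FA I} (hx : IsHomog w x) :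
    projWt k x = x ∨ projWt k x = 0 := by
  by_cases h : w = k
  · left; exact projWt_of_isHomog (h ▸ hx)
  · right
    exact projWt_eq_zero (fun m hm => by rw [hx m hm]; exact h)
end Proj
section Cases
variable {I : Type*}

lemma adpow_one {Ψ : Set I} (x y : FA I) : adpow Ψ 1 x y = sbra Ψ x y := rfl

lemma wt_apply_adpow (n : ℕ) (i j : I) (hne : i ≠ j) :
    ((n • Finsupp.single i (1:ℕ) + Finsupp.single j 1 : I →₀ ℕ)) i = n := by
  rw [Finsupp.add_apply, Finsupp.smul_apply, Finsupp.single_eq_same,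
    Finsupp.single_eq_of_ne' (Ne.symm hne)]
  simp

lemma bkm_rel_cases (A : BKMSupermatrix I) (r : FA I) (hr : r ∈ bkmRels A) :
    ∃ w : I →₀ ℕ, IsHomog w r ∧
      (r ∈ commRels A.quasiDynkin A.Ψ ∨ ∃ i, i ∈ A.Ire ∪ A.Psi0 ∧ 2 ≤ w i) := by
  rcases hr with ((⟨i, j, hire, hne, rfl⟩ | ⟨i, j, hire, hΨ, hne, rfl⟩) |
      ⟨i, hpsi, rfl⟩) | ⟨i, j, hne, ha0, rfl⟩
  · refine ⟨_, isHomog_adpow _ i j, ?_⟩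
    by_cases ha : A.a i j = 0
    · left
      have hn : serreExp A i j = 1 := by
        rw [serreExp, ha]; simp
      rw [hn, adpow_one]
      exact ⟨i, j, hne, fun h => h.2 ha, rfl⟩
    · right
      refine ⟨i, Or.inl hire, ?_⟩
      rw [wt_apply_adpow _ i j hne]
      have halt : A.a i j < 0 := lt_of_le_of_ne (A.offdiag i j hne) ha
      have hfl : ⌊A.a i j⌋ < 0 := Int.floor_lt.mpr (by simpa using halt)
      rw [serreExp]
      omega
  · refine ⟨_, isHomog_adpow _ i j, ?_⟩
    by_cases ha : A.a i j = 0
    · left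
      have hn : serreExpHalf A i j = 1 := by
        rw [serreExpHalf, ha]; norm_num
      rw [hn, adpow_one]
      exact ⟨i, j, hne, fun h => h.2 ha, rfl⟩
    · right
      refine ⟨i, Or.inl hire, ?_⟩
      rw [wt_apply_adpow _ i j hne]
      have halt : A.a i j < 0 := lt_of_le_of_ne (A.offdiag i j hne) ha
      have hfl : ⌊A.a i j / 2⌋ < 0 := Int.floor_lt.mpr (by push_cast; linarith)
      rw [serreExpHalf]
      omega
  · refine ⟨_, isHomog_adpow _ i i, ?_⟩
    right
    refine ⟨i, Or.inr hpsi, ?_⟩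
    have hn : serreExpHalf A i i = 1 := by
      rw [serreExpHalf, hpsi.2]; norm_num
    rw [hn, Finsupp.add_apply, Finsupp.smul_apply, Finsupp.single_eq_same]
    simp
  · refine ⟨Finsupp.single i 1 + Finsupp.single j 1,
      isHomog_sbra (isHomog_eGen i) (isHomog_eGen j), Or.inl ?_⟩
    exact ⟨i, j, hne, fun h => h.2 ha0, rfl⟩

lemma projWt_tsi (A : BKMSupermatrix I) (k : I →₀ ℕ) (hfree : IsFreeWt A k) {x : FA I}
    (hx : x ∈ tsi (bkmRels A)) :
    projWt k x ∈ tsi (commRels A.quasiDynkin A.Ψ) := by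
  induction hx using Submodule.span_induction with
  | mem g hg =>
      obtain ⟨a, b, r, hr, rfl⟩ := hg
      obtain ⟨w, hw, hcase⟩ := bkm_rel_cases A r hr
      have hg : IsHomog (wordWt a + w + wordWt b)
          (MonoidAlgebra.single a 1 * r * MonoidAlgebra.single b 1) :=
        ((isHomog_single a 1).mul hw).mul (isHomog_single b 1)
      rcases hcase with hcomm | ⟨i, hi, h2⟩
      · rcases projWt_mem_pair (k := k) hg with h | h
        · rw [h]
          exact Submodule.subset_span ⟨a, b, r, hcomm, rfl⟩
        · rw [h]; exact Submodule.zero_mem _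
      · have : projWt k (MonoidAlgebra.single a 1 * r * MonoidAlgebra.single b 1) = 0 := by
          apply projWt_eq_zero
          intro m hm hk
          rw [hg m hm] at hk
          have hki : k i ≤ 1 := hfree i hi
          have : (wordWt a + w + wordWt b) i = k i := by rw [hk]
          rw [Finsupp.add_apply, Finsupp.add_apply] at this
          omega
        rw [this]; exact Submodule.zero_mem _
  | zero => rw [map_zero]; exact Submodule.zero_mem _
  | add p q _ _ hp hq => rw [map_add]; exact Submodule.add_mem _ hp hq
  | smul t p _ hp => rw [map_smul]; exact Submodule.smul_mem _ _ hp

lemma mem_tsi_comm_of_homog (A : BKMSupermatrix I) (k : I →₀ ℕ) (hfree : IsFreeWt A k)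
    {x : FA I} (hx : IsHomog k x) (hmem : x ∈ tsi (bkmRels A)) :
    x ∈ tsi (commRels A.quasiDynkin A.Ψ) := by
  rw [← projWt_of_isHomog hx]
  exact projWt_tsi A k hfree hmem
end Cases

/-- For a free weight `k` (i.e. `kᵢ ≤ 1` for `i ∈ I^re ∪ Ψ₀`), the root space
`g_{η(k)}` of a BKM superalgebra with quasi Dynkin diagram `(G,Ψ)` is isomorphic, as a
vector space, to the `k`-graded component `LS_k(G,Ψ)` of the free partially commutative
Lie superalgebra; in particular `mult η(k) = dim LS_k(G,Ψ)`. -/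
theorem free_root_space_iso_LS {I : Type*} (A : BKMSupermatrix I) (k : I →₀ ℕ)
    (hfree : IsFreeWt A k) :
    Nonempty (↥(gWeight A k) ≃ₗ[ℂ] ↥(LSwt A.quasiDynkin A.Ψ k)) ∧
      Module.rank ℂ ↥(gWeight A k) = Module.rank ℂ ↥(LSwt A.quasiDynkin A.Ψ k) := by
  have hsub : ∀ ⦃x y : FA I⦄, relOf (commRels A.quasiDynkin A.Ψ) x y →
      quotMap (bkmRels A) x = quotMap (bkmRels A) y := by
    rintro x y ⟨hx, rfl⟩
    rw [map_zero]
    apply quotMap_rel_zero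
    rcases hx with ⟨i, j, hne, hnadj, rfl⟩
    have ha : A.a i j = 0 := by
      by_contra h; exact hnadj ⟨hne, h⟩
    exact Or.inr ⟨i, j, hne, ha, rfl⟩
  let φ : QuotAlg (commRels A.quasiDynkin A.Ψ) →ₐ[ℂ] QuotAlg (bkmRels A) :=
    RingQuot.liftAlgHom ℂ ⟨quotMap (bkmRels A), hsub⟩
  have hφ : ∀ x : FA I,
      φ (quotMap (commRels A.quasiDynkin A.Ψ) x) = quotMap (bkmRels A) x := by
    intro x
    exact RingQuot.liftAlgHom_mkAlgHom_apply ℂ _ _ x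
  have hmap : Submodule.map φ.toLinearMap (LSwt A.quasiDynkin A.Ψ k) = gWeight A k := by
    rw [LSwt, gWeight, imageWeight, imageWeight, Submodule.map_span]
    congr 1
    ext z
    constructor
    · rintro ⟨y, ⟨x, hlw, hhom, rfl⟩, rfl⟩
      exact ⟨x, hlw, hhom, (hφ x)⟩
    · rintro ⟨x, hlw, hhom, rfl⟩
      exact ⟨quotMap _ x, ⟨x, hlw, hhom, rfl⟩, (hφ x)⟩
  have hrep : ∀ y ∈ LSwt A.quasiDynkin A.Ψ k, ∃ x : FA I, IsHomog k x ∧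
      y = quotMap (commRels A.quasiDynkin A.Ψ) x := by
    intro y hy
    induction hy using Submodule.span_induction with
    | mem g hg =>
        obtain ⟨x, _, hhom, rfl⟩ := hg
        exact ⟨x, hhom, rfl⟩
    | zero => exact ⟨0, isHomog_zero k, (map_zero _).symm⟩
    | add p q _ _ hp hq =>
        obtain ⟨x1, h1, rfl⟩ := hp
        obtain ⟨x2, h2, rfl⟩ := hq
        exact ⟨x1 + x2, h1.add h2, (map_add _ _ _).symm⟩
    | smul t p _ hp =>
        obtain ⟨x1, h1, rfl⟩ := hp
        exact ⟨t • x1, h1.smul, (map_smul _ _ _).symm⟩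
  have hinj : ∀ y ∈ LSwt A.quasiDynkin A.Ψ k, φ y = 0 → y = 0 := by
    intro y hy h0
    obtain ⟨x, hhom, rfl⟩ := hrep y hy
    rw [hφ x] at h0
    exact quotMap_eq_zero_of_mem
      (mem_tsi_comm_of_homog A k hfree hhom (mem_tsi_of_quotMap_eq_zero h0))
  let f : ↥(LSwt A.quasiDynkin A.Ψ k) →ₗ[ℂ] ↥(gWeight A k) :=
    (φ.toLinearMap.domRestrict (LSwt A.quasiDynkin A.Ψ k)).codRestrict (gWeight A k)
      (fun y => by rw [← hmap]; exact Submodule.mem_map_of_mem y.2)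
  have hfinj : Function.Injective f := by
    intro y1 y2 h
    have h' : φ (y1 : QuotAlg (commRels A.quasiDynkin A.Ψ)) = φ (y2 : _) :=
      congrArg Subtype.val h
    have hsubm : ((y1 : QuotAlg (commRels A.quasiDynkin A.Ψ)) - y2) ∈
        LSwt A.quasiDynkin A.Ψ k := Submodule.sub_mem _ y1.2 y2.2
    have : ((y1 : QuotAlg (commRels A.quasiDynkin A.Ψ)) - y2) = 0 := by
      apply hinj _ hsubm
      rw [map_sub, h', sub_self]
    exact Subtype.ext (sub_eq_zero.mp this)
  have hfsurj : Function.Surjective f := by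
    rintro ⟨z, hz⟩
    rw [← hmap] at hz
    obtain ⟨y, hy, hyz⟩ := Submodule.mem_map.mp hz
    exact ⟨⟨y, hy⟩, Subtype.ext hyz⟩
  let e := LinearEquiv.ofBijective f ⟨hfinj, hfsurj⟩
  exact ⟨⟨e.symm⟩, e.symm.rank_eq⟩
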